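/- If four points of ℤ³ form a regular tetrahedron, then the common squared Euclidean distance between its vertices equals 2ℓ² for some positive integer ℓ; in other words, every regular tetrahedron in ℤ³ has side length ℓ√2 for some positive integer ℓ. -/

import Mathlib

/-- Dot product of integer vectors in `ℤ³`. -/
def dot3 (u v : Fin 3 → ℤ) : ℤ := ∑ i, u i * v i

/-- Squared Euclidean distance between two points of `ℤ³`. -/
def distSq (u v : Fin 3 → ℤ) : ℤ := dot3 (u - v) (u - v)

/-- A regular tetrahedron in `ℤ³`: four points with equal nonzero pairwise distances. -/
def IsRegularTetrahedron (T : Set (Fin 3 → ℤ)) : Prop :=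
  T.ncard = 4 ∧ ∃ s : ℤ, 0 < s ∧ ∀ u ∈ T, ∀ v ∈ T, u ≠ v → distSq u v = s

lemma dot3_sub_sub (x y : Fin 3 → ℤ) :
    dot3 (x - y) (x - y) = dot3 x x - 2 * dot3 x y + dot3 y y := by
  simp [dot3, Fin.sum_univ_three]; ring

/-- Gram determinant identity in dimension 3. -/
lemma gram_det (u v w : Fin 3 → ℤ) :
    (u 0 * (v 1 * w 2 - v 2 * w 1) - u 1 * (v 0 * w 2 - v 2 * w 0)
      + u 2 * (v 0 * w 1 - v 1 * w 0)) ^ 2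
    = dot3 u u * dot3 v v * dot3 w w + 2 * dot3 u v * dot3 u w * dot3 v w
      - dot3 u u * (dot3 v w) ^ 2 - dot3 v v * (dot3 u w) ^ 2
      - dot3 w w * (dot3 u v) ^ 2 := by
  simp [dot3, Fin.sum_univ_three]; ring

lemma exists_det (a b c d : Fin 3 → ℤ) (s : ℤ)
    (hba : distSq b a = s) (hca : distSq c a = s) (hda : distSq d a = s)
    (hbc : distSq b c = s) (hbd : distSq b d = s) (hcd : distSq c d = s) :
    ∃ D : ℤ, 2 * D ^ 2 = s ^ 3 := by
  set u := b - a with hu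
  set v := c - a with hv
  set w := d - a with hw
  have h1 : dot3 u u = s := hba
  have h2 : dot3 v v = s := hca
  have h3 : dot3 w w = s := hda
  have e1 : b - c = u - v := by rw [hu, hv]; abel
  have e2 : b - d = u - w := by rw [hu, hw]; abel
  have e3 : c - d = v - w := by rw [hv, hw]; abel
  have hp : 2 * dot3 u v = s := by
    have := hbc; unfold distSq at this; rw [e1, dot3_sub_sub, h1, h2] at this; linarith
  have hq : 2 * dot3 u w = s := by
    have := hbd; unfold distSq at this; rw [e2, dot3_sub_sub, h1, h3] at this; linarith
  have hr : 2 * dot3 v w = s := by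
    have := hcd; unfold distSq at this; rw [e3, dot3_sub_sub, h2, h3] at this; linarith
  refine ⟨u 0 * (v 1 * w 2 - v 2 * w 1) - u 1 * (v 0 * w 2 - v 2 * w 0)
      + u 2 * (v 0 * w 1 - v 1 * w 0), ?_⟩
  have hD := gram_det u v w
  set p := dot3 u v
  have hq' : dot3 u w = p := by linarith
  have hr' : dot3 v w = p := by linarith
  rw [h1, h2, h3, hq', hr'] at hD
  have hs2 : s = 2 * p := by linarith
  rw [hs2] at hD ⊢
  linear_combination 2 * hD

lemma nat_step (n k : ℕ) (hn : 0 < n) (h : n ^ 3 = 2 * k ^ 2) :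
    ∃ m : ℕ, 0 < m ∧ n = 2 * m ^ 2 := by
  -- 2 ∣ n
  have h2n : 2 ∣ n := by
    have : (2 : ℕ).Prime := Nat.prime_two
    exact this.dvd_of_dvd_pow (show 2 ∣ n ^ 3 from ⟨k ^ 2, h⟩)
  obtain ⟨a, rfl⟩ := h2n
  have ha : 0 < a := by omega
  have hk2 : k ^ 2 = 4 * a ^ 3 := by nlinarith
  have h2k : 2 ∣ k := by
    have : (2 : ℕ).Prime := Nat.prime_two
    exact this.dvd_of_dvd_pow (show 2 ∣ k ^ 2 from ⟨2 * a ^ 3, by linarith⟩)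
  obtain ⟨b, rfl⟩ := h2k
  have hb2 : b ^ 2 = a ^ 3 := by nlinarith
  have hb : 0 < b := by
    rcases Nat.eq_zero_or_pos b with h0 | h0
    · exfalso; rw [h0] at hb2; simp at hb2; nlinarith [pow_pos ha 3]
    · exact h0
  -- a ∣ b via factorizations
  have hab : a ∣ b := by
    rw [← Nat.factorization_le_iff_dvd ha.ne' hb.ne']
    intro p
    have hfac : 2 * b.factorization p = 3 * a.factorization p := by
      have := congrArg (fun x => x.factorization p) hb2
      simpa [Nat.factorization_pow, mul_comm] using this
    omega
  obtain ⟨c, rfl⟩ := hab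
  have hc : 0 < c := by
    rcases Nat.eq_zero_or_pos c with h0 | h0
    · exfalso; rw [h0] at hb2; simp at hb2; nlinarith [pow_pos ha 3]
    · exact h0
  have : a = c ^ 2 := by
    have h' : a ^ 2 * c ^ 2 = a ^ 2 * a := by ring_nf; ring_nf at hb2; linarith
    have := Nat.eq_of_mul_eq_mul_left (by positivity : 0 < a ^ 2) h'
    omega
  exact ⟨c, hc, by rw [this]⟩

/-- The common squared distance between vertices of a regular tetrahedron in `ℤ³`
equals `2ℓ²` for some positive integer `ℓ`, i.e. the side length is `ℓ√2`. -/
theorem regularTetrahedron_sideSq_eq_two_mul_sq (T : Set (Fin 3 → ℤ))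
    (hT : IsRegularTetrahedron T) :
    ∃ ℓ : ℤ, 0 < ℓ ∧ ∀ u ∈ T, ∀ v ∈ T, u ≠ v → distSq u v = 2 * ℓ ^ 2 := by
  obtain ⟨hcard, s, hs, hdist⟩ := hT
  -- extract four distinct points
  have hfin : T.Finite := by
    by_contra hinf
    rw [Set.Infinite.ncard (by simpa using hinf)] at hcard
    omega
  have hne : T.Nonempty := by
    rcases T.eq_empty_or_nonempty with h | h
    · rw [h] at hcard; simp at hcard
    · exact h
  obtain ⟨a, ha⟩ := hne
  have hdiff : (T \ {a}).ncard = 3 := by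
    rw [Set.ncard_diff_singleton_of_mem ha, hcard]
  obtain ⟨b, c, d, hbc, hbd, hcd, hset⟩ := Set.ncard_eq_three.mp hdiff
  have hbT : b ∈ T := by
    have : b ∈ T \ {a} := by rw [hset]; simp
    exact this.1
  have hcT : c ∈ T := by
    have : c ∈ T \ {a} := by rw [hset]; simp
    exact this.1
  have hdT : d ∈ T := by
    have : d ∈ T \ {a} := by rw [hset]; simp
    exact this.1
  have hab : b ≠ a := by
    have : b ∈ T \ {a} := by rw [hset]; simp
    intro h; exact this.2 (by simp [h])
  have hac : c ≠ a := by
    have : c ∈ T \ {a} := by rw [hset]; simp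
    intro h; exact this.2 (by simp [h])
  have had : d ≠ a := by
    have : d ∈ T \ {a} := by rw [hset]; simp
    intro h; exact this.2 (by simp [h])
  obtain ⟨D, hD⟩ := exists_det a b c d s
    (hdist b hbT a ha hab) (hdist c hcT a ha hac) (hdist d hdT a ha had)
    (hdist b hbT c hcT hbc) (hdist b hbT d hdT hbd) (hdist c hcT d hdT hcd)
  -- number theory
  have hn : ((s.toNat : ℤ)) = s := Int.toNat_of_nonneg hs.le
  have hnat : s.toNat ^ 3 = 2 * D.natAbs ^ 2 := by
    have : ((s.toNat ^ 3 : ℕ) : ℤ) = ((2 * D.natAbs ^ 2 : ℕ) : ℤ) := by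
      push_cast
      rw [hn, sq_abs]
      linarith
    exact_mod_cast this
  obtain ⟨m, hm, hnm⟩ := nat_step s.toNat D.natAbs (by omega) hnat
  refine ⟨(m : ℤ), by exact_mod_cast hm, ?_⟩
  have hs2 : s = 2 * (m : ℤ) ^ 2 := by
    rw [← hn, hnm]; push_cast; ring
  intro u hu v hv huv
  rw [hdist u hu v hv huv, hs2]
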